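/- Let T > 0, let (S_t)_{t ∈ (0, T]} be a family of nonnegative square-integrable real random variables on a probability space, let 0 < S₀ < K be real numbers, and let n be a positive integer with n ≥ 2/(K − S₀). Let f : ℝ → ℝ be a measurable function such that (x − K)⁺ ≤ f(x) ≤ (x − K)⁺ + 1/n for all x ∈ ℝ and f(x) = (x − K)⁺ whenever |x − K| > 1/n. Suppose that (1/t)(E[f(S_t)] − f(S₀)) → A and (1/t) E[(S_t − S₀)²] → Q as t → 0⁺, for some real numbers A and Q. Then A − (4 Q)/(n (K − S₀)²) ≤ liminf_{t → 0⁺} (1/t) E[(S_t − K)⁺] ≤ limsup_{t → 0⁺} (1/t) E[(S_t − K)⁺] ≤ A. -/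

import Mathlib

open MeasureTheory Filter Topology

/-- Sandwich bounds for the short-time behavior of at-the-money
regularized call payoffs: if `(E[f(S_t)] − f(S₀))/t → A` and `E[(S_t − S₀)²]/t → Q`
as `t → 0⁺`, where `(x−K)⁺ ≤ f ≤ (x−K)⁺ + 1/n` and `f = (·−K)⁺` off a `1/n`-band
around `K`, with `n ≥ 2/(K − S₀)`, then
`A − 4Q/(n(K−S₀)²) ≤ liminf (1/t)E[(S_t−K)⁺] ≤ limsup (1/t)E[(S_t−K)⁺] ≤ A`. -/
theorem liminf_limsup_call_sandwich
    {Ω : Type*} [MeasurableSpace Ω] (P : Measure Ω) [IsProbabilityMeasure P]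
    {T : ℝ} (hT : 0 < T) (S : ℝ → Ω → ℝ) (S0 K : ℝ) (hS0 : 0 < S0) (hK : S0 < K)
    (hS_nonneg : ∀ t ∈ Set.Ioc (0:ℝ) T, ∀ᵐ ω ∂P, 0 ≤ S t ω)
    (hS_L2 : ∀ t ∈ Set.Ioc (0:ℝ) T, MemLp (S t) 2 P)
    (n : ℕ) (hn : 0 < n) (hn2 : 2 / (K - S0) ≤ (n : ℝ))
    (f : ℝ → ℝ) (hf_meas : Measurable f)
    (hf_ge : ∀ x, max (x - K) 0 ≤ f x)
    (hf_le : ∀ x, f x ≤ max (x - K) 0 + 1 / n)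
    (hf_eq : ∀ x, |x - K| > 1 / n → f x = max (x - K) 0)
    (A Q : ℝ)
    (hA : Tendsto (fun t => ((∫ ω, f (S t ω) ∂P) - f S0) / t) (𝓝[>] 0) (𝓝 A))
    (hQ : Tendsto (fun t => (∫ ω, (S t ω - S0) ^ 2 ∂P) / t) (𝓝[>] 0) (𝓝 Q)) :
    A - 4 * Q / (n * (K - S0) ^ 2) ≤
        liminf (fun t => (∫ ω, max (S t ω - K) 0 ∂P) / t) (𝓝[>] (0:ℝ)) ∧
      liminf (fun t => (∫ ω, max (S t ω - K) 0 ∂P) / t) (𝓝[>] (0:ℝ)) ≤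
        limsup (fun t => (∫ ω, max (S t ω - K) 0 ∂P) / t) (𝓝[>] (0:ℝ)) ∧
      limsup (fun t => (∫ ω, max (S t ω - K) 0 ∂P) / t) (𝓝[>] (0:ℝ)) ≤ A := by

  have hKS : (0:ℝ) < K - S0 := by linarith
  have hnpos : (0:ℝ) < n := by exact_mod_cast hn
  have h1n : 1 / (n:ℝ) ≤ (K - S0) / 2 := by
    rw [div_le_div_iff₀ hnpos two_pos]
    have h2 : 2 ≤ (n:ℝ) * (K - S0) := by
      rw [div_le_iff₀ hKS] at hn2; linarith
    linarith
  set c : ℝ := 4 / (n * (K - S0) ^ 2) with hc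
  have hcpos : 0 < c := by positivity
  -- key pointwise bound
  have hkey : ∀ x, f x ≤ max (x - K) 0 + c * (x - S0) ^ 2 := by
    intro x
    by_cases h : |x - K| > 1 / n
    · rw [hf_eq x h]
      nlinarith [sq_nonneg (x - S0), hcpos.le, mul_nonneg hcpos.le (sq_nonneg (x - S0))]
    · push_neg at h
      have habs : (K - S0) / 2 ≤ |x - S0| := by
        have h1 : |x - K| + |x - S0| ≥ K - S0 := by
          have := abs_sub_abs_le_abs_sub (x - S0) (x - K)
          have h2 := neg_abs_le (x - K)
          have h3 := neg_abs_le (x - S0)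
          nlinarith [abs_nonneg (x - S0), abs_nonneg (x - K),
            le_abs_self (x - S0), le_abs_self (x - K)]
        linarith
      have hsq : (K - S0) ^ 2 / 4 ≤ (x - S0) ^ 2 := by
        have := sq_abs (x - S0)
        nlinarith [abs_nonneg (x - S0)]
      have h1c : 1 / (n:ℝ) ≤ c * (x - S0) ^ 2 := by
        have : c * ((K - S0) ^ 2 / 4) = 1 / n := by
          rw [hc]
          field_simp
        calc (1:ℝ)/n = c * ((K - S0) ^ 2 / 4) := this.symm
          _ ≤ c * (x - S0) ^ 2 := by
            exact mul_le_mul_of_nonneg_left hsq hcpos.le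
      have := hf_le x
      linarith
  have hfS0 : f S0 = 0 := by
    have : |S0 - K| > 1 / n := by
      rw [abs_sub_comm, abs_of_pos hKS]; linarith
    rw [hf_eq S0 this, max_eq_right (by linarith)]
  set g : ℝ → ℝ := fun t => (∫ ω, max (S t ω - K) 0 ∂P) / t with hg
  set F : ℝ → ℝ := fun t => (∫ ω, f (S t ω) ∂P) / t with hF
  set R : ℝ → ℝ := fun t => (∫ ω, (S t ω - S0) ^ 2 ∂P) / t with hR
  have hFl : Tendsto F (𝓝[>] 0) (𝓝 A) := by
    refine hA.congr (fun t => ?_)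
    simp [hF, hfS0]
  have hIoc : ∀ᶠ t in 𝓝[>] (0:ℝ), t ∈ Set.Ioc (0:ℝ) T := by
    have : Set.Ioc (0:ℝ) T ∈ 𝓝[>] (0:ℝ) := Ioc_mem_nhdsGT_of_mem ⟨le_refl 0, hT⟩
    exact this
  -- integrability facts and eventual inequalities
  have hmain : ∀ t ∈ Set.Ioc (0:ℝ) T, g t ≤ F t ∧ F t - c * R t ≤ g t := by
    intro t ht
    have hm := (hS_L2 t ht).aestronglyMeasurable
    have hSint : Integrable (S t) P := (hS_L2 t ht).integrable (by norm_num)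
    have int1 : Integrable (fun ω => max (S t ω - K) 0) P :=
      (hSint.sub (integrable_const K)).pos_part
    have int2 : Integrable (fun ω => (S t ω - S0) ^ 2) P := by
      have : MemLp (fun ω => S t ω - S0) 2 P := (hS_L2 t ht).sub (memLp_const S0)
      exact this.integrable_sq
    have intf : Integrable (fun ω => f (S t ω)) P := by
      refine Integrable.mono (int1.add (integrable_const (1 / (n:ℝ))))
        ((hf_meas.comp_aemeasurable hm.aemeasurable).aestronglyMeasurable) ?_
      refine ae_of_all _ (fun ω => ?_)
      have h0 : 0 ≤ f (S t ω) := le_trans (le_max_right _ _) (hf_ge _)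
      have h1 : 0 ≤ max (S t ω - K) 0 + 1 / (n:ℝ) := by positivity
      simp only [Pi.add_apply]
      rw [Real.norm_eq_abs, Real.norm_eq_abs, abs_of_nonneg h0, abs_of_nonneg h1]
      exact hf_le _
    have htpos : 0 < t := ht.1
    constructor
    · have h := integral_mono int1 intf (fun ω => hf_ge _)
      simp only [hg, hF]
      gcongr
    · have hle : (∫ ω, f (S t ω) ∂P) ≤
          (∫ ω, max (S t ω - K) 0 ∂P) + c * ∫ ω, (S t ω - S0) ^ 2 ∂P := by
        have h2 := integral_mono intf (int1.add (int2.const_mul c))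
          (fun ω => hkey (S t ω))
        simp only [Pi.add_apply] at h2
        rwa [integral_add int1 (int2.const_mul c), integral_const_mul c fun ω => (S t ω - S0) ^ 2] at h2
      have : (∫ ω, f (S t ω) ∂P) / t ≤
          ((∫ ω, max (S t ω - K) 0 ∂P) + c * ∫ ω, (S t ω - S0) ^ 2 ∂P) / t := by
        gcongr
      rw [add_div] at this
      simp only [hF, hg, hR]
      rw [mul_div_assoc] at this
      linarith
  have hub : ∀ᶠ t in 𝓝[>] (0:ℝ), g t ≤ F t :=
    hIoc.mono (fun t ht => (hmain t ht).1)
  have hlb : ∀ᶠ t in 𝓝[>] (0:ℝ), F t - c * R t ≤ g t :=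
    hIoc.mono (fun t ht => (hmain t ht).2)
  have hlow : Tendsto (fun t => F t - c * R t) (𝓝[>] (0:ℝ)) (𝓝 (A - c * Q)) :=
    hFl.sub (hQ.const_mul c)
  -- boundedness
  have hbdd_above : IsBoundedUnder (· ≤ ·) (𝓝[>] (0:ℝ)) g := by
    refine isBoundedUnder_of_eventually_le (a := A + 1) ?_
    have hF1 : ∀ᶠ t in 𝓝[>] (0:ℝ), F t ≤ A + 1 :=
      hFl.eventually (eventually_le_nhds (lt_add_one A))
    filter_upwards [hub, hF1] with t h1 h2 using le_trans h1 h2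
  have hbdd_below : IsBoundedUnder (· ≥ ·) (𝓝[>] (0:ℝ)) g := by
    refine isBoundedUnder_of_eventually_ge (a := A - c * Q - 1) ?_
    have hF1 : ∀ᶠ t in 𝓝[>] (0:ℝ), A - c * Q - 1 ≤ F t - c * R t :=
      hlow.eventually (eventually_ge_nhds (by linarith))
    filter_upwards [hlb, hF1] with t h1 h2 using le_trans h2 h1
  have heq : A - 4 * Q / (n * (K - S0) ^ 2) = A - c * Q := by rw [hc]; ring
  refine ⟨?_, ?_, ?_⟩
  · rw [heq, ← hlow.liminf_eq]
    exact liminf_le_liminf hlb hlow.isBoundedUnder_ge hbdd_above.isCoboundedUnder_ge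
  · exact liminf_le_limsup hbdd_above hbdd_below
  · rw [← hFl.limsup_eq]
    exact limsup_le_limsup hub (hbdd_below.isCoboundedUnder_le) hFl.isBoundedUnder_le
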